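/- Let η > 0 and suppose the initialization θ^(0) = (w1^(0), b1^(0), w2^(0), b2^(0)) satisfies w1^(0) > 0, w2^(0) < 0, and both breakpoints β1^(0) = −b1^(0)/w1^(0) and β2^(0) = −b2^(0)/w2^(0) lie in (−1, 1). Define the gradient descent iterates θ^(t+1) = θ^(t) − η*∇L(θ^(t)). Then L is differentiable at every iterate, the sequences w1^(t), b1^(t), b2^(t) are strictly increasing, w2^(t) is strictly decreasing (so the signs of w1^(t) and w2^(t) never change), and for all t: β1^(t+1) ∈ (−1, β1^(t)) and β2^(t+1) ∈ (β2^(t), 1). -/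

import Mathlib

/-- The two-neuron ReLU network: `θ = (w1, b1, w2, b2)`. -/
noncomputable def Phi (θ : EuclideanSpace ℝ (Fin 4)) (x : ℝ) : ℝ :=
  max 0 (θ 0 * x + θ 1) - max 0 (θ 2 * x + θ 3)

/-- The training loss on `(x1,y1) = (-1,-1)`, `(x2,y2) = (1,1)` under the
exponential loss. -/
noncomputable def Loss (θ : EuclideanSpace ℝ (Fin 4)) : ℝ :=
  (1/2) * Real.exp (Phi θ (-1)) + (1/2) * Real.exp (-(Phi θ 1))

/-- Auxiliary: smooth model of the loss on the relevant activation region. -/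
noncomputable def FAux (θ : EuclideanSpace ℝ (Fin 4)) : ℝ :=
  (1/2) * Real.exp (θ 2 - θ 3) + (1/2) * Real.exp (-(θ 0 + θ 1))

/-- Auxiliary: the gradient vector. -/
noncomputable def gVec (A B : ℝ) : EuclideanSpace ℝ (Fin 4) := !₂[-A, -A, B, -B]

/-- Coordinate projections as continuous linear maps over `ℝ`. -/
noncomputable def pr (i : Fin 4) : EuclideanSpace ℝ (Fin 4) →L[ℝ] ℝ :=
  EuclideanSpace.proj i

@[simp] lemma pr_apply (i : Fin 4) (v : EuclideanSpace ℝ (Fin 4)) : pr i v = v i := rfl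

lemma key (p : EuclideanSpace ℝ (Fin 4)) (h1 : p 1 < p 0) (h2 : 0 < p 0 + p 1)
    (h3 : p 2 < p 3) (h4 : p 2 + p 3 < 0) :
    HasGradientAt Loss
      (gVec (Real.exp (-(p 0 + p 1)) / 2) (Real.exp (p 2 - p 3) / 2)) p := by
  have hcont : ∀ i : Fin 4, Continuous (fun θ : EuclideanSpace ℝ (Fin 4) => θ i) :=
    fun i => (EuclideanSpace.proj i).continuous
  -- eventual equality of Loss and FAux
  have hev : Loss =ᶠ[nhds p] FAux := by
    have hU : IsOpen {θ : EuclideanSpace ℝ (Fin 4) |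
        (θ 1 < θ 0 ∧ 0 < θ 0 + θ 1) ∧ θ 2 < θ 3 ∧ θ 2 + θ 3 < 0} := by
      refine (((isOpen_lt (hcont 1) (hcont 0)).inter
        (isOpen_lt continuous_const ((hcont 0).add (hcont 1)))).inter
        (((isOpen_lt (hcont 2) (hcont 3)).inter
          (isOpen_lt ((hcont 2).add (hcont 3)) continuous_const))))
    have hp : p ∈ {θ : EuclideanSpace ℝ (Fin 4) |
        (θ 1 < θ 0 ∧ 0 < θ 0 + θ 1) ∧ θ 2 < θ 3 ∧ θ 2 + θ 3 < 0} :=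
      ⟨⟨h1, h2⟩, h3, h4⟩
    filter_upwards [hU.mem_nhds hp] with θ hθ
    obtain ⟨⟨t1, t2⟩, t3, t4⟩ := hθ
    have e1 : θ 0 * (-1) + θ 1 ≤ 0 := by nlinarith
    have e2 : (0:ℝ) ≤ θ 2 * (-1) + θ 3 := by nlinarith
    have e3 : (0:ℝ) ≤ θ 0 * 1 + θ 1 := by nlinarith
    have e4 : θ 2 * 1 + θ 3 ≤ 0 := by nlinarith
    simp only [Loss, Phi, FAux, max_eq_left e1, max_eq_right e2, max_eq_right e3,
      max_eq_left e4]
    ring_nf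
  -- derivative of FAux
  set A := Real.exp (-(p 0 + p 1)) / 2 with hA
  set B := Real.exp (p 2 - p 3) / 2 with hB
  have d1 : HasFDerivAt (fun θ : EuclideanSpace ℝ (Fin 4) => θ 2 - θ 3)
      (pr 2 - pr 3) p := by
    exact (pr 2).hasFDerivAt.sub
      (pr 3).hasFDerivAt
  have d2 : HasFDerivAt (fun θ : EuclideanSpace ℝ (Fin 4) => -(θ 0 + θ 1))
      (-(pr 0 + pr 1)) p := by
    exact ((pr 0).hasFDerivAt.add
      (pr 1).hasFDerivAt).neg
  have e1 := (d1.exp).const_mul (1/2 : ℝ)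
  have e2 := (d2.exp).const_mul (1/2 : ℝ)
  have hF : HasFDerivAt FAux
      ((1/2 : ℝ) • (Real.exp (p 2 - p 3) • (pr 2 - pr 3)) +
       (1/2 : ℝ) • (Real.exp (-(p 0 + p 1)) • (-(pr 0 + pr 1)))) p :=
    e1.add e2
  have hL : HasFDerivAt Loss
      ((1/2 : ℝ) • (Real.exp (p 2 - p 3) • (pr 2 - pr 3)) +
       (1/2 : ℝ) • (Real.exp (-(p 0 + p 1)) • (-(pr 0 + pr 1)))) p :=
    hF.congr_of_eventuallyEq hev
  rw [hasGradientAt_iff_hasFDerivAt]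
  refine hL.congr_fderiv ?_
  apply ContinuousLinearMap.ext
  intro v
  simp only [InnerProductSpace.toDual_apply_apply, PiLp.inner_apply, RCLike.inner_apply,
    Fin.sum_univ_four, ContinuousLinearMap.add_apply, ContinuousLinearMap.smul_apply,
    ContinuousLinearMap.sub_apply, ContinuousLinearMap.neg_apply,
    pr_apply, gVec, PiLp.toLp_apply, smul_eq_mul, starRingEnd_apply, star_trivial,
    Matrix.cons_val_zero, Matrix.cons_val_one, Matrix.head_cons, Matrix.cons_val_two,
    Matrix.tail_cons, Matrix.cons_val_three]
  ring

/-- invariance of the activation pattern and monotonicity of the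
parameters and breakpoints along the gradient descent trajectory, starting from
an initialization with `w1 > 0 > w2` and both breakpoints in `(-1,1)`. -/
theorem stmt_5 (η : ℝ) (hη : 0 < η) (θ : ℕ → EuclideanSpace ℝ (Fin 4))
    (hw1 : 0 < θ 0 0) (hw2 : θ 0 2 < 0)
    (hβ1 : -(θ 0 1) / (θ 0 0) ∈ Set.Ioo (-1:ℝ) 1)
    (hβ2 : -(θ 0 3) / (θ 0 2) ∈ Set.Ioo (-1:ℝ) 1)
    (hstep : ∀ t : ℕ, θ (t+1) = θ t - η • gradient Loss (θ t)) :
    (∀ t : ℕ, DifferentiableAt ℝ Loss (θ t)) ∧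
    StrictMono (fun t : ℕ => θ t 0) ∧
    StrictMono (fun t : ℕ => θ t 1) ∧
    StrictMono (fun t : ℕ => θ t 3) ∧
    StrictAnti (fun t : ℕ => θ t 2) ∧
    (∀ t : ℕ, 0 < θ t 0 ∧ θ t 2 < 0) ∧
    (∀ t : ℕ, -(θ (t+1) 1) / (θ (t+1) 0) ∈ Set.Ioo (-1:ℝ) (-(θ t 1) / (θ t 0))) ∧
    (∀ t : ℕ, -(θ (t+1) 3) / (θ (t+1) 2) ∈ Set.Ioo (-(θ t 3) / (θ t 2)) (1:ℝ)) := by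
  -- region predicate
  set R : ℕ → Prop := fun t =>
    θ t 1 < θ t 0 ∧ 0 < θ t 0 + θ t 1 ∧ θ t 2 < θ t 3 ∧ θ t 2 + θ t 3 < 0 with hRdef
  -- initial region membership
  have hR0 : R 0 := by
    obtain ⟨a1, a2⟩ := hβ1
    obtain ⟨a3, a4⟩ := hβ2
    rw [div_lt_iff₀ hw1] at a2
    rw [lt_div_iff₀ hw1] at a1
    rw [div_lt_iff_of_neg hw2] at a4
    rw [lt_div_iff_of_neg hw2] at a3
    refine ⟨by linarith, by linarith, by linarith, by linarith⟩
  -- one-step analysis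
  have hstep' : ∀ t, R t → ∃ A B : ℝ, 0 < A ∧ 0 < B ∧
      θ (t+1) 0 = θ t 0 + η * A ∧ θ (t+1) 1 = θ t 1 + η * A ∧
      θ (t+1) 2 = θ t 2 - η * B ∧ θ (t+1) 3 = θ t 3 + η * B := by
    intro t ⟨h1, h2, h3, h4⟩
    have hg := key (θ t) h1 h2 h3 h4
    have hgr := hg.gradient
    refine ⟨Real.exp (-(θ t 0 + θ t 1)) / 2, Real.exp (θ t 2 - θ t 3) / 2,
      by positivity, by positivity, ?_, ?_, ?_, ?_⟩ <;>
    · rw [hstep t, hgr]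
      simp only [gVec, PiLp.toLp_apply, PiLp.sub_apply, PiLp.smul_apply, smul_eq_mul,
        Matrix.cons_val_zero, Matrix.cons_val_one, Matrix.head_cons,
        Matrix.cons_val_two, Matrix.tail_cons, Matrix.cons_val_three]
      try ring
  -- region is invariant
  have hR : ∀ t, R t := by
    intro t
    induction t with
    | zero => exact hR0
    | succ n ih =>
      obtain ⟨A, B, hA, hB, s0, s1, s2, s3⟩ := hstep' n ih
      obtain ⟨h1, h2, h3, h4⟩ := ih
      refine ⟨?_, ?_, ?_, ?_⟩ <;> simp only [s0, s1, s2, s3] <;> nlinarith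
  have hsgn : ∀ t, 0 < θ t 0 ∧ θ t 2 < 0 := by
    intro t
    obtain ⟨h1, h2, h3, h4⟩ := hR t
    exact ⟨by linarith, by linarith⟩
  refine ⟨?_, ?_, ?_, ?_, ?_, hsgn, ?_, ?_⟩
  · intro t
    obtain ⟨h1, h2, h3, h4⟩ := hR t
    exact (key (θ t) h1 h2 h3 h4).differentiableAt
  · apply strictMono_nat_of_lt_succ
    intro t
    obtain ⟨A, B, hA, hB, s0, s1, s2, s3⟩ := hstep' t (hR t)
    rw [s0]; nlinarith
  · apply strictMono_nat_of_lt_succ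
    intro t
    obtain ⟨A, B, hA, hB, s0, s1, s2, s3⟩ := hstep' t (hR t)
    rw [s1]; nlinarith
  · apply strictMono_nat_of_lt_succ
    intro t
    obtain ⟨A, B, hA, hB, s0, s1, s2, s3⟩ := hstep' t (hR t)
    rw [s3]; nlinarith
  · apply strictAnti_nat_of_succ_lt
    intro t
    obtain ⟨A, B, hA, hB, s0, s1, s2, s3⟩ := hstep' t (hR t)
    rw [s2]; nlinarith
  · intro t
    obtain ⟨A, B, hA, hB, s0, s1, s2, s3⟩ := hstep' t (hR t)
    obtain ⟨h1, h2, h3, h4⟩ := hR t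
    have hw : 0 < θ t 0 := by linarith
    have hw' : 0 < θ (t+1) 0 := by rw [s0]; nlinarith
    constructor
    · rw [lt_div_iff₀ hw']
      rw [s0, s1]; nlinarith
    · rw [div_lt_div_iff₀ hw' hw]
      rw [s0, s1]
      nlinarith [mul_lt_mul_of_pos_right h1 (mul_pos hη hA)]
  · intro t
    obtain ⟨A, B, hA, hB, s0, s1, s2, s3⟩ := hstep' t (hR t)
    obtain ⟨h1, h2, h3, h4⟩ := hR t
    have hw : θ t 2 < 0 := by linarith
    have hw' : θ (t+1) 2 < 0 := by rw [s2]; nlinarith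
    have hrw : ∀ b w : ℝ, -b / w = b / (-w) := by
      intro b w; rw [div_neg, neg_div]
    rw [hrw (θ t 3) (θ t 2), hrw (θ (t+1) 3) (θ (t+1) 2)]
    have hnw : 0 < -θ t 2 := by linarith
    have hnw' : 0 < -θ (t+1) 2 := by linarith
    constructor
    · rw [div_lt_div_iff₀ hnw hnw']
      rw [s2, s3]
      nlinarith [mul_lt_mul_of_pos_right (show θ t 3 < -θ t 2 by linarith) (mul_pos hη hB)]
    · rw [div_lt_one hnw']
      rw [s2, s3]; nlinarith
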